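/- Let p ≥ 1 and k ≥ 1 be integers with gcd(k,p) = 1. If cos(πk/p) is a rational number, then p ≤ 3. -/

import Mathlib

open Real

lemma aux_int_of_two_cos (x : ℂ) (N : ℕ) (hN : 0 < N) (hx : x ^ N = 1)
    (q : ℚ) (hq : (q : ℂ) = x + x ^ (N - 1)) : ∃ n : ℤ, (n : ℚ) = q := by
  have hint : IsIntegral ℤ x := by
    refine ⟨Polynomial.X ^ N - Polynomial.C 1, Polynomial.monic_X_pow_sub_C 1 (by omega), ?_⟩
    simp [hx]
  have h2 : IsIntegral ℤ ((q : ℚ) : ℂ) := by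
    rw [show ((q : ℚ) : ℂ) = x + x ^ (N - 1) from hq]
    exact hint.add (hint.pow _)
  have h3 : IsIntegral ℤ q := by
    have : (algebraMap ℚ ℂ) q = (q : ℂ) := by simp
    rw [← this] at h2
    exact (isIntegral_algebraMap_iff (algebraMap ℚ ℂ).injective).mp h2
  obtain ⟨n, hn⟩ := IsIntegrallyClosed.isIntegral_iff.mp h3
  exact ⟨n, by simpa using hn⟩

/-- If `gcd(k,p) = 1` and `cos(πk/p)` is rational, then `p ≤ 3`. -/
theorem stmt_6 (p k : ℕ) (hp : 1 ≤ p) (hk : 1 ≤ k) (hkp : Nat.Coprime k p)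
    (h : ∃ m : ℚ, Real.cos (π * k / p) = (m : ℝ)) : p ≤ 3 := by
  obtain ⟨m, hm⟩ := h
  have hp0 : (p : ℝ) ≠ 0 := by positivity
  set θ : ℝ := π * k / p with hθ
  set ζ : ℂ := Complex.exp (θ * Complex.I) with hζdef
  have hζ : ζ ^ (2 * p) = 1 := by
    rw [hζdef, ← Complex.exp_nat_mul]
    rw [show ((2 * p : ℕ) : ℂ) * ((θ : ℝ) * Complex.I) = ((k : ℤ) : ℂ) * (2 * π * Complex.I) by
      push_cast [hθ]
      have hp0C : (p : ℂ) ≠ 0 := by exact_mod_cast Nat.cast_ne_zero.mpr (by omega)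
      field_simp]
    exact Complex.exp_int_mul_two_pi_mul_I k
  have hζne : ζ ≠ 0 := Complex.exp_ne_zero _
  have hζinv : ζ ^ (2 * p - 1) = Complex.exp (-((θ : ℝ) * Complex.I)) := by
    have h1 : ζ ^ (2 * p - 1) * ζ = 1 := by
      rw [← pow_succ, show 2 * p - 1 + 1 = 2 * p by omega, hζ]
    have h2 : Complex.exp (-((θ : ℝ) * Complex.I)) * ζ = 1 := by
      rw [hζdef, ← Complex.exp_add]; simp
    exact mul_right_cancel₀ hζne (h1.trans h2.symm)
  have hsum : ((2 * m : ℚ) : ℂ) = ζ + ζ ^ (2 * p - 1) := by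
    rw [hζinv, hζdef]
    have : Complex.cos θ = (Complex.exp ((θ:ℝ) * Complex.I) + Complex.exp (-((θ:ℝ) * Complex.I))) / 2 := by
      rw [Complex.cos]; ring_nf
    have hcos : (m : ℂ) = Complex.cos (θ : ℝ) := by
      rw [← Complex.ofReal_cos, hm]; norm_cast
    push_cast
    rw [hcos, this]
    ring
  obtain ⟨n, hn⟩ := aux_int_of_two_cos ζ (2 * p) (by omega) hζ (2 * m) hsum
  -- bound on n
  have hm1 : -1 ≤ (m : ℝ) := hm ▸ Real.neg_one_le_cos θ
  have hm2 : (m : ℝ) ≤ 1 := hm ▸ Real.cos_le_one θ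
  have hnR : ((n : ℝ)) = 2 * (m : ℝ) := by exact_mod_cast congrArg (fun q : ℚ => (q : ℝ)) hn
  have hn1 : -2 ≤ n := by
    have : (-2 : ℝ) ≤ (n : ℝ) := by rw [hnR]; linarith
    exact_mod_cast this
  have hn2 : n ≤ 2 := by
    have : (n : ℝ) ≤ 2 := by rw [hnR]; linarith
    exact_mod_cast this
  have hc : Real.cos θ = (n : ℝ) / 2 := by rw [hm]; rw [hnR]; ring
  have hs : Real.sin θ ^ 2 = 1 - ((n : ℝ) / 2) ^ 2 := by
    have := Real.sin_sq_add_cos_sq θ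
    rw [hc] at this; linarith
  have h6 : Real.sin (6 * θ) = 0 := by
    rw [show (6 : ℝ) * θ = 2 * (3 * θ) by ring, Real.sin_two_mul, Real.sin_three_mul,
      Real.cos_three_mul, hc]
    interval_cases n
    · have hs0 : Real.sin θ = 0 := by
        have h0 : Real.sin θ ^ 2 = 0 := by rw [hs]; norm_num
        exact (pow_eq_zero_iff two_ne_zero).mp h0
      rw [hs0]; norm_num
    · push_cast at hs ⊢; linear_combination (-8 * Real.sin θ) * hs
    · norm_num
    · push_cast at hs ⊢; linear_combination (8 * Real.sin θ) * hs
    · have hs0 : Real.sin θ = 0 := by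
        have h0 : Real.sin θ ^ 2 = 0 := by rw [hs]; norm_num
        exact (pow_eq_zero_iff two_ne_zero).mp h0
      rw [hs0]; norm_num
  obtain ⟨j, hj⟩ := Real.sin_eq_zero_iff.mp h6
  have hjp : (j : ℤ) * p = 6 * k := by
    have : (j : ℝ) * p = 6 * k := by
      rw [hθ] at hj
      field_simp at hj
      have h' : π * ((j : ℝ) * p) = π * (6 * k) := by linear_combination π * hj
      exact mul_left_cancel₀ Real.pi_ne_zero h'
    exact_mod_cast this
  have hdvd : (p : ℤ) ∣ (6 * k : ℤ) := ⟨j, by linarith [hjp]⟩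
  have hdvdN : p ∣ 6 * k := by exact_mod_cast hdvd
  have hp6 : p ∣ 6 := (Nat.Coprime.dvd_of_dvd_mul_right (hkp.symm) hdvdN)
  have hple : p ≤ 6 := Nat.le_of_dvd (by norm_num) hp6
  -- exclude p = 6
  by_contra hcon
  push_neg at hcon
  interval_cases p
  · exact absurd hp6 (by norm_num)
  · exact absurd hp6 (by norm_num)
  · -- p = 6
    have hk6 : k % 6 = 1 ∨ k % 6 = 5 := by
      have hg : Nat.gcd (k % 6) 6 = 1 := by
        rw [← Nat.gcd_rec]
        exact Nat.coprime_comm.mp hkp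
      have hlt : k % 6 < 6 := Nat.mod_lt k (by norm_num)
      interval_cases h : k % 6 <;> simp_all
    have hcos2 : Real.cos (2 * θ) = 1 / 2 := by
      rcases hk6 with hr | hr
      · obtain ⟨q, hq⟩ : ∃ q : ℕ, k = 6 * q + 1 := ⟨k / 6, by omega⟩
        have : 2 * θ = π / 3 + ((q : ℕ) : ℤ) * (2 * π) := by
          rw [hθ, hq]; push_cast; ring
        rw [this, Real.cos_add_int_mul_two_pi, Real.cos_pi_div_three]
      · obtain ⟨q, hq⟩ : ∃ q : ℕ, k = 6 * q + 5 := ⟨k / 6, by omega⟩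
        have : 2 * θ = -(π / 3) + (((q + 1 : ℕ) : ℤ) : ℝ) * (2 * π) := by
          rw [hθ, hq]; push_cast; ring
        rw [this, Real.cos_add_int_mul_two_pi, Real.cos_neg, Real.cos_pi_div_three]
    have hcos2' : Real.cos (2 * θ) = 2 * ((n : ℝ) / 2) ^ 2 - 1 := by
      rw [Real.cos_two_mul, hc]
    have : ((n : ℝ)) ^ 2 = 3 := by
      rw [hcos2] at hcos2'
      nlinarith [hcos2']
    have hz : (n : ℤ) ^ 2 = 3 := by exact_mod_cast this
    interval_cases n <;> omega
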